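/- Let (V,⟨·,·⟩) be a 3-dimensional real inner product space and let R be an algebraic curvature tensor on V having 3-nonnegative curvature operator of the second kind. Then the scalar curvature S of R is nonnegative, and Ric(v,v) ≥ S/12 for every unit vector v ∈ V. -/

import Mathlib

open scoped RealInnerProductSpace

variable {V : Type*} [NormedAddCommGroup V] [InnerProductSpace ℝ V]

/-- `R` is an algebraic curvature tensor: antisymmetric in the first two slots,
symmetric under exchange of the first and second pairs, and satisfying the
first Bianchi identity. -/
def IsAlgCurvatureTensor (R : V →ₗ[ℝ] V →ₗ[ℝ] V →ₗ[ℝ] V →ₗ[ℝ] ℝ) : Prop :=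
  (∀ x y z w : V, R x y z w = - R y x z w) ∧
  (∀ x y z w : V, R x y z w = R z w x y) ∧
  (∀ x y z w : V, R x y z w + R y z x w + R z x y w = 0)

/-- The Ricci curvature `Ric(x,y) = Σ_j R(x,e_j,y,e_j)` with respect to an
orthonormal basis. -/
noncomputable def ricci {n : ℕ} (b : OrthonormalBasis (Fin n) ℝ V)
    (R : V →ₗ[ℝ] V →ₗ[ℝ] V →ₗ[ℝ] V →ₗ[ℝ] ℝ) (x y : V) : ℝ :=
  ∑ j, R x (b j) y (b j)

/-- The scalar curvature `S = Σ_{i,j} R_{ijij}`. -/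
noncomputable def scalarCurv {n : ℕ} (b : OrthonormalBasis (Fin n) ℝ V)
    (R : V →ₗ[ℝ] V →ₗ[ℝ] V →ₗ[ℝ] V →ₗ[ℝ] ℝ) : ℝ :=
  ∑ i, ∑ j, R (b i) (b j) (b i) (b j)

/-- `φ` is a symmetric bilinear form which is traceless with respect to the
orthonormal basis `b`. -/
def IsTracelessSymForm {n : ℕ} (b : OrthonormalBasis (Fin n) ℝ V)
    (φ : V →ₗ[ℝ] V →ₗ[ℝ] ℝ) : Prop :=
  (∀ x y : V, φ x y = φ y x) ∧ (∑ i, φ (b i) (b i) = 0)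

/-- The inner product `⟨φ,ψ⟩ = Σ_{i,j} φ(e_i,e_j) ψ(e_i,e_j)` of bilinear forms. -/
noncomputable def formInner {n : ℕ} (b : OrthonormalBasis (Fin n) ℝ V)
    (φ ψ : V →ₗ[ℝ] V →ₗ[ℝ] ℝ) : ℝ :=
  ∑ i, ∑ j, φ (b i) (b j) * ψ (b i) (b j)

/-- The curvature operator of the second kind
`R̊(φ,ψ) = Σ_{i,j,k,l} R_{ijkl} φ(e_i,e_l) ψ(e_j,e_k)`. -/
noncomputable def secondKind {n : ℕ} (b : OrthonormalBasis (Fin n) ℝ V)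
    (R : V →ₗ[ℝ] V →ₗ[ℝ] V →ₗ[ℝ] V →ₗ[ℝ] ℝ)
    (φ ψ : V →ₗ[ℝ] V →ₗ[ℝ] ℝ) : ℝ :=
  ∑ i, ∑ j, ∑ k, ∑ l,
    R (b i) (b j) (b k) (b l) * φ (b i) (b l) * ψ (b j) (b k)

/-- `R` has `k`-nonnegative curvature operator of the second kind:
`Σ_{a=1}^k R̊(φ_a,φ_a) ≥ 0` for every orthonormal `k`-tuple of traceless
symmetric bilinear forms. -/
def kNonnegSecondKind {n : ℕ} (b : OrthonormalBasis (Fin n) ℝ V)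
    (R : V →ₗ[ℝ] V →ₗ[ℝ] V →ₗ[ℝ] V →ₗ[ℝ] ℝ) (k : ℕ) : Prop :=
  ∀ φ : Fin k → (V →ₗ[ℝ] V →ₗ[ℝ] ℝ),
    (∀ a, IsTracelessSymForm b (φ a)) →
    (∀ a a', formInner b (φ a) (φ a') = if a = a' then 1 else 0) →
    0 ≤ ∑ a, secondKind b R (φ a) (φ a)

/-- `R` has `k`-positive curvature operator of the second kind:
`Σ_{a=1}^k R̊(φ_a,φ_a) > 0` for every orthonormal `k`-tuple of traceless
symmetric bilinear forms. -/
def kPosSecondKind {n : ℕ} (b : OrthonormalBasis (Fin n) ℝ V)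
    (R : V →ₗ[ℝ] V →ₗ[ℝ] V →ₗ[ℝ] V →ₗ[ℝ] ℝ) (k : ℕ) : Prop :=
  ∀ φ : Fin k → (V →ₗ[ℝ] V →ₗ[ℝ] ℝ),
    (∀ a, IsTracelessSymForm b (φ a)) →
    (∀ a a', formInner b (φ a) (φ a') = if a = a' then 1 else 0) →
    0 < ∑ a, secondKind b R (φ a) (φ a)



noncomputable def tp (u w : V) : V →ₗ[ℝ] V →ₗ[ℝ] ℝ :=
  LinearMap.mk₂ ℝ (fun x y => ⟪x, u⟫ * ⟪y, w⟫)
    (fun x x' y => by simp [inner_add_left]; ring)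
    (fun c x y => by simp [real_inner_smul_left, smul_eq_mul]; ring)
    (fun x y y' => by simp [inner_add_left]; ring)
    (fun c x y => by simp [real_inner_smul_left, smul_eq_mul]; ring)

@[simp] lemma tp_apply (u w x y : V) : tp u w x y = ⟪x, u⟫ * ⟪y, w⟫ := rfl

lemma key {n : ℕ} (b : OrthonormalBasis (Fin n) ℝ V) (f : V →ₗ[ℝ] ℝ) (x : V) :
    ∑ i, ⟪b i, x⟫ * f (b i) = f x := by
  conv_rhs => rw [← b.sum_repr' x]
  rw [map_sum]
  simp [smul_eq_mul]

lemma par {n : ℕ} (b : OrthonormalBasis (Fin n) ℝ V) (x y : V) :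
    ∑ i, ⟪b i, x⟫ * ⟪b i, y⟫ = ⟪x, y⟫ := by
  have h := key b ((innerSL ℝ y).toLinearMap) x
  simp only [ContinuousLinearMap.coe_coe, innerSL_apply_apply] at h
  calc ∑ i, ⟪b i, x⟫ * ⟪b i, y⟫ = ∑ i, ⟪b i, x⟫ * ⟪y, b i⟫ := by
        exact Finset.sum_congr rfl fun i _ => by rw [real_inner_comm (b i) y]
    _ = ⟪y, x⟫ := h
    _ = ⟪x, y⟫ := real_inner_comm x y

noncomputable def gform : V →ₗ[ℝ] V →ₗ[ℝ] ℝ :=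
  LinearMap.mk₂ ℝ (fun x y => ⟪x, y⟫)
    (fun x x' y => by simp [inner_add_left])
    (fun c x y => by simp [real_inner_smul_left, smul_eq_mul])
    (fun x y y' => by simp [inner_add_right])
    (fun c x y => by simp [real_inner_smul_right, smul_eq_mul])

@[simp] lemma gform_apply (x y : V) : gform x y = ⟪x, y⟫ := rfl

lemma gform_eq {n : ℕ} (b : OrthonormalBasis (Fin n) ℝ V) :
    (gform : V →ₗ[ℝ] V →ₗ[ℝ] ℝ) = ∑ m, tp (b m) (b m) := by
  apply LinearMap.ext; intro x; apply LinearMap.ext; intro y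
  simp only [gform_apply, LinearMap.coe_sum, Finset.sum_apply, LinearMap.sum_apply, tp_apply]
  rw [← par b x y]
  exact Finset.sum_congr rfl fun m _ => by
    rw [real_inner_comm x (b m), real_inner_comm y (b m)]

section SK
variable {n : ℕ} (b : OrthonormalBasis (Fin n) ℝ V)
  (R : V →ₗ[ℝ] V →ₗ[ℝ] V →ₗ[ℝ] V →ₗ[ℝ] ℝ)

lemma SK_tp (a p q d : V) :
    secondKind b R (tp a d) (tp p q) = R a p q d := by
  unfold secondKind
  have e4 : ∀ x y z : V, ∑ l, ⟪b l, d⟫ * R x y z (b l) = R x y z d :=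
    fun x y z => key b (R x y z) d
  have e3 : ∀ x y : V, ∑ k, ⟪b k, q⟫ * R x y (b k) d = R x y q d := by
    intro x y; simpa using key b ((R x y).flip d) q
  have e2 : ∀ x : V, ∑ j, ⟪b j, p⟫ * R x (b j) q d = R x p q d := by
    intro x; simpa using key b (((R x).flip q).flip d) p
  have e1 : ∑ i, ⟪b i, a⟫ * R (b i) p q d = R a p q d := by
    simpa using key b (((R.flip p).flip q).flip d) a
  calc ∑ i, ∑ j, ∑ k, ∑ l,
        R (b i) (b j) (b k) (b l) * tp a d (b i) (b l) * tp p q (b j) (b k)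
      = ∑ i, ⟪b i, a⟫ * ∑ j, ⟪b j, p⟫ * ∑ k, ⟪b k, q⟫ * ∑ l, ⟪b l, d⟫ *
          R (b i) (b j) (b k) (b l) := by
        simp only [Finset.mul_sum, tp_apply]
        exact Finset.sum_congr rfl fun i _ => Finset.sum_congr rfl fun j _ =>
          Finset.sum_congr rfl fun k _ => Finset.sum_congr rfl fun l _ => by ring
    _ = R a p q d := by
        simp only [e4, e3, e2]; exact e1

lemma SK_add_left (φ φ' ψ : V →ₗ[ℝ] V →ₗ[ℝ] ℝ) :
    secondKind b R (φ + φ') ψ = secondKind b R φ ψ + secondKind b R φ' ψ := by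
  simp only [secondKind, LinearMap.add_apply, mul_add, add_mul, Finset.sum_add_distrib]

lemma SK_add_right (φ ψ ψ' : V →ₗ[ℝ] V →ₗ[ℝ] ℝ) :
    secondKind b R φ (ψ + ψ') = secondKind b R φ ψ + secondKind b R φ ψ' := by
  simp only [secondKind, LinearMap.add_apply, mul_add, add_mul, Finset.sum_add_distrib]

lemma SK_smul_left (r : ℝ) (φ ψ : V →ₗ[ℝ] V →ₗ[ℝ] ℝ) :
    secondKind b R (r • φ) ψ = r * secondKind b R φ ψ := by
  simp only [secondKind, LinearMap.smul_apply, smul_eq_mul, Finset.mul_sum]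
  exact Finset.sum_congr rfl fun i _ => Finset.sum_congr rfl fun j _ =>
    Finset.sum_congr rfl fun k _ => Finset.sum_congr rfl fun l _ => by ring

lemma SK_smul_right (r : ℝ) (φ ψ : V →ₗ[ℝ] V →ₗ[ℝ] ℝ) :
    secondKind b R φ (r • ψ) = r * secondKind b R φ ψ := by
  simp only [secondKind, LinearMap.smul_apply, smul_eq_mul, Finset.mul_sum]
  exact Finset.sum_congr rfl fun i _ => Finset.sum_congr rfl fun j _ =>
    Finset.sum_congr rfl fun k _ => Finset.sum_congr rfl fun l _ => by ring

lemma SK_sum_left {m : ℕ} (F : Fin m → (V →ₗ[ℝ] V →ₗ[ℝ] ℝ)) (ψ : V →ₗ[ℝ] V →ₗ[ℝ] ℝ) :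
    secondKind b R (∑ a, F a) ψ = ∑ a, secondKind b R (F a) ψ :=
  map_sum (AddMonoidHom.mk' (fun φ => secondKind b R φ ψ)
    (fun φ φ' => SK_add_left b R φ φ' ψ)) F Finset.univ

lemma SK_sum_right {m : ℕ} (φ : V →ₗ[ℝ] V →ₗ[ℝ] ℝ) (F : Fin m → (V →ₗ[ℝ] V →ₗ[ℝ] ℝ)) :
    secondKind b R φ (∑ a, F a) = ∑ a, secondKind b R φ (F a) :=
  map_sum (AddMonoidHom.mk' (fun ψ => secondKind b R φ ψ)
    (fun ψ ψ' => SK_add_right b R φ ψ ψ')) F Finset.univ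

lemma FI_tp (a d p q : V) :
    formInner b (tp a d) (tp p q) = ⟪a, p⟫ * ⟪d, q⟫ := by
  unfold formInner
  calc ∑ i, ∑ j, tp a d (b i) (b j) * tp p q (b i) (b j)
      = (∑ i, ⟪b i, a⟫ * ⟪b i, p⟫) * (∑ j, ⟪b j, d⟫ * ⟪b j, q⟫) := by
        rw [Finset.sum_mul_sum]
        exact Finset.sum_congr rfl fun i _ => Finset.sum_congr rfl fun j _ => by
          simp only [tp_apply]; ring
    _ = ⟪a, p⟫ * ⟪d, q⟫ := by rw [par, par]

lemma FI_add_left (φ φ' ψ : V →ₗ[ℝ] V →ₗ[ℝ] ℝ) :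
    formInner b (φ + φ') ψ = formInner b φ ψ + formInner b φ' ψ := by
  simp only [formInner, LinearMap.add_apply, add_mul, Finset.sum_add_distrib]

lemma FI_add_right (φ ψ ψ' : V →ₗ[ℝ] V →ₗ[ℝ] ℝ) :
    formInner b φ (ψ + ψ') = formInner b φ ψ + formInner b φ ψ' := by
  simp only [formInner, LinearMap.add_apply, mul_add, Finset.sum_add_distrib]

lemma FI_smul_left (r : ℝ) (φ ψ : V →ₗ[ℝ] V →ₗ[ℝ] ℝ) :
    formInner b (r • φ) ψ = r * formInner b φ ψ := by
  simp only [formInner, LinearMap.smul_apply, smul_eq_mul, Finset.mul_sum]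
  exact Finset.sum_congr rfl fun i _ => Finset.sum_congr rfl fun j _ => by ring

lemma FI_smul_right (r : ℝ) (φ ψ : V →ₗ[ℝ] V →ₗ[ℝ] ℝ) :
    formInner b φ (r • ψ) = r * formInner b φ ψ := by
  simp only [formInner, LinearMap.smul_apply, smul_eq_mul, Finset.mul_sum]
  exact Finset.sum_congr rfl fun i _ => Finset.sum_congr rfl fun j _ => by ring

lemma FI_sum_left {m : ℕ} (F : Fin m → (V →ₗ[ℝ] V →ₗ[ℝ] ℝ)) (ψ : V →ₗ[ℝ] V →ₗ[ℝ] ℝ) :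
    formInner b (∑ a, F a) ψ = ∑ a, formInner b (F a) ψ :=
  map_sum (AddMonoidHom.mk' (fun φ => formInner b φ ψ)
    (fun φ φ' => FI_add_left b φ φ' ψ)) F Finset.univ

lemma FI_sum_right {m : ℕ} (φ : V →ₗ[ℝ] V →ₗ[ℝ] ℝ) (F : Fin m → (V →ₗ[ℝ] V →ₗ[ℝ] ℝ)) :
    formInner b φ (∑ a, F a) = ∑ a, formInner b φ (F a) :=
  map_sum (AddMonoidHom.mk' (fun ψ => formInner b φ ψ)
    (fun ψ ψ' => FI_add_right b φ ψ ψ')) F Finset.univ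

lemma trace_indep (c : OrthonormalBasis (Fin n) ℝ V) (B : V →ₗ[ℝ] V →ₗ[ℝ] ℝ) :
    ∑ i, B (b i) (b i) = ∑ i, B (c i) (c i) := by
  calc ∑ i, B (b i) (b i)
      = ∑ i, ∑ j, ⟪c j, b i⟫ * B (c j) (b i) := by
        refine Finset.sum_congr rfl fun i _ => ?_
        have h := key c (B.flip (b i)) (b i)
        simp only [LinearMap.flip_apply] at h
        exact h.symm
    _ = ∑ j, ∑ i, ⟪c j, b i⟫ * B (c j) (b i) := Finset.sum_comm
    _ = ∑ j, B (c j) (c j) := by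
        refine Finset.sum_congr rfl fun j _ => ?_
        rw [← key b (B (c j)) (c j)]
        exact Finset.sum_congr rfl fun i _ => by rw [real_inner_comm]

end SK


section Vals
variable {n : ℕ} (b : OrthonormalBasis (Fin n) ℝ V)

lemma trace_tp (a d : V) : ∑ i, tp a d (b i) (b i) = ⟪a, d⟫ := by
  simp only [tp_apply]; exact par b a d

lemma trace_gform : ∑ i, gform (b i) (b i) = (n : ℝ) := by
  have h1 : ∀ i, ⟪b i, b i⟫ = 1 := fun i => by
    rw [real_inner_self_eq_norm_sq, b.orthonormal.1 i]; norm_num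
  simp [h1]

lemma FI_comm (φ ψ : V →ₗ[ℝ] V →ₗ[ℝ] ℝ) : formInner b φ ψ = formInner b ψ φ := by
  unfold formInner
  exact Finset.sum_congr rfl fun i _ => Finset.sum_congr rfl fun j _ => by ring

lemma FI_tp_g (a d : V) : formInner b (tp a d) gform = ⟪a, d⟫ := by
  rw [gform_eq b, FI_sum_right]
  simp only [FI_tp]
  calc ∑ m, ⟪a, b m⟫ * ⟪d, b m⟫ = ∑ m, ⟪b m, a⟫ * ⟪b m, d⟫ :=
        Finset.sum_congr rfl fun m _ => by
          rw [real_inner_comm (b m) a, real_inner_comm (b m) d]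
    _ = ⟪a, d⟫ := par b a d

lemma FI_g_tp (p q : V) : formInner b gform (tp p q) = ⟪p, q⟫ := by
  rw [FI_comm, FI_tp_g]

lemma FI_g_g : formInner b (gform : V →ₗ[ℝ] V →ₗ[ℝ] ℝ) gform = (n : ℝ) := by
  have hbo := b.orthonormal
  rw [orthonormal_iff_ite] at hbo
  rw [gform_eq b, FI_sum_left]
  simp only [FI_sum_right, FI_tp, hbo]
  simp

end Vals

theorem stmt_1
    (b : OrthonormalBasis (Fin 3) ℝ V)
    (R : V →ₗ[ℝ] V →ₗ[ℝ] V →ₗ[ℝ] V →ₗ[ℝ] ℝ)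
    (hR : IsAlgCurvatureTensor R)
    (h3 : kNonnegSecondKind b R 3) :
    0 ≤ scalarCurv b R ∧
      ∀ v : V, ‖v‖ = 1 → scalarCurv b R / 12 ≤ ricci b R v v := by
  obtain ⟨hanti, hpair, _⟩ := hR
  have hlast : ∀ x y z w : V, R x y z w = - R x y w z := by
    intro x y z w
    rw [hpair x y z w, hanti z w x y, hpair w z x y]
  have hz1 : ∀ x z w : V, R x x z w = 0 := by
    intro x z w; have := hanti x x z w; linarith
  haveI : FiniteDimensional ℝ V := Module.Finite.of_basis b.toBasis
  have hrank : Module.finrank ℝ V = 3 := by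
    rw [Module.finrank_eq_card_basis b.toBasis, Fintype.card_fin]
  have hmain : ∀ v : V, ‖v‖ = 1 → scalarCurv b R / 12 ≤ ricci b R v v := by
    intro v hv
    have hone : Orthonormal ℝ (Set.restrict {(0 : Fin 3)} (fun _ : Fin 3 => v)) := by
      constructor
      · intro i; exact hv
      · intro i j hij
        exact absurd (Subtype.ext ((Set.mem_singleton_iff.1 i.2).trans
          (Set.mem_singleton_iff.1 j.2).symm)) hij
    obtain ⟨c, hc0⟩ := Orthonormal.exists_orthonormalBasis_extension_of_card_eq
      (by rw [Fintype.card_fin]; exact hrank) hone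
    have hcv : c 0 = v := hc0 0 rfl
    have hcon := c.orthonormal
    rw [orthonormal_iff_ite] at hcon
    have hvv : ⟪v, v⟫ = 1 := by rw [real_inner_self_eq_norm_sq, hv]; norm_num
    have huu : ⟪c 1, c 1⟫ = 1 := by simpa using hcon 1 1
    have hww : ⟪c 2, c 2⟫ = 1 := by simpa using hcon 2 2
    have hvu : ⟪v, c 1⟫ = 0 := by rw [← hcv]; simpa using hcon 0 1
    have hvw : ⟪v, c 2⟫ = 0 := by rw [← hcv]; simpa using hcon 0 2
    have huw : ⟪c 1, c 2⟫ = 0 := by simpa using hcon 1 2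
    have huv : ⟪c 1, v⟫ = 0 := (real_inner_comm v (c 1)).trans hvu
    have hwv : ⟪c 2, v⟫ = 0 := (real_inner_comm v (c 2)).trans hvw
    have hwu : ⟪c 2, c 1⟫ = 0 := (real_inner_comm (c 1) (c 2)).trans huw
    set s2 : ℝ := (Real.sqrt 2)⁻¹ with hs2def
    set s6 : ℝ := (Real.sqrt 6)⁻¹ with hs6def
    have hs2 : s2 * s2 = 1/2 := by
      rw [hs2def, ← mul_inv, Real.mul_self_sqrt (by norm_num : (0:ℝ) ≤ 2)]; norm_num
    have hs6 : s6 * s6 = 1/6 := by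
      rw [hs6def, ← mul_inv, Real.mul_self_sqrt (by norm_num : (0:ℝ) ≤ 6)]; norm_num
    set φ0 : V →ₗ[ℝ] V →ₗ[ℝ] ℝ := s2 • tp v (c 1) + s2 • tp (c 1) v with hφ0
    set φ1 : V →ₗ[ℝ] V →ₗ[ℝ] ℝ := s2 • tp v (c 2) + s2 • tp (c 2) v with hφ1
    set φ2 : V →ₗ[ℝ] V →ₗ[ℝ] ℝ := s6 • gform + (-(3*s6)) • tp v v with hφ2
    -- Ricci via the basis c
    have hric : ricci b R v v = R v (c 1) v (c 1) + R v (c 2) v (c 2) := by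
      have ht := trace_indep b c ((R v).flip v)
      simp only [LinearMap.flip_apply] at ht
      unfold ricci
      rw [ht, Fin.sum_univ_three, hcv, hz1 v v v]
      ring
    -- secondKind values
    have hSKgg : secondKind b R gform gform = -(scalarCurv b R) := by
      rw [gform_eq b, SK_sum_left]
      simp only [SK_sum_right, SK_tp]
      have e : ∀ x y : V, R x y y x = -(R x y x y) := fun x y => hlast x y y x
      unfold scalarCurv
      simp only [e, Finset.sum_neg_distrib]
    have hSKgv : secondKind b R gform (tp v v) = -(ricci b R v v) := by
      rw [gform_eq b, SK_sum_left]
      simp only [SK_tp]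
      have e : ∀ x : V, R x v v x = -(R v x v x) := fun x => hanti x v v x
      unfold ricci
      simp only [e, Finset.sum_neg_distrib]
    have hSKvg : secondKind b R (tp v v) gform = -(ricci b R v v) := by
      rw [gform_eq b, SK_sum_right]
      simp only [SK_tp]
      have e : ∀ x : V, R v x x v = -(R v x v x) := fun x => hlast v x x v
      unfold ricci
      simp only [e, Finset.sum_neg_distrib]
    have hSK0 : secondKind b R φ0 φ0 = R v (c 1) v (c 1) := by
      rw [hφ0]
      simp only [SK_add_left, SK_add_right, SK_smul_left, SK_smul_right, SK_tp]
      rw [hz1 v (c 1) (c 1), hz1 (c 1) v v]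
      have e : R (c 1) v (c 1) v = R v (c 1) v (c 1) := by
        rw [hanti (c 1) v (c 1) v, hlast v (c 1) (c 1) v, neg_neg]
      rw [e]
      linear_combination (2 * R v (c 1) v (c 1)) * hs2
    have hSK1 : secondKind b R φ1 φ1 = R v (c 2) v (c 2) := by
      rw [hφ1]
      simp only [SK_add_left, SK_add_right, SK_smul_left, SK_smul_right, SK_tp]
      rw [hz1 v (c 2) (c 2), hz1 (c 2) v v]
      have e : R (c 2) v (c 2) v = R v (c 2) v (c 2) := by
        rw [hanti (c 2) v (c 2) v, hlast v (c 2) (c 2) v, neg_neg]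
      rw [e]
      linear_combination (2 * R v (c 2) v (c 2)) * hs2
    have hSK2 : secondKind b R φ2 φ2 = ricci b R v v - scalarCurv b R / 6 := by
      rw [hφ2]
      simp only [SK_add_left, SK_add_right, SK_smul_left, SK_smul_right]
      rw [hSKgg, hSKgv, hSKvg, SK_tp, hz1 v v v]
      linear_combination (6 * ricci b R v v - scalarCurv b R) * hs6
    -- traceless symmetric
    have hT0 : IsTracelessSymForm b φ0 := by
      constructor
      · intro x y
        rw [hφ0]
        simp only [LinearMap.add_apply, LinearMap.smul_apply, smul_eq_mul, tp_apply]
        ring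
      · rw [hφ0]
        simp only [LinearMap.add_apply, LinearMap.smul_apply, smul_eq_mul,
          Finset.sum_add_distrib]
        rw [← Finset.mul_sum, ← Finset.mul_sum, trace_tp, trace_tp, hvu, huv]
        ring
    have hT1 : IsTracelessSymForm b φ1 := by
      constructor
      · intro x y
        rw [hφ1]
        simp only [LinearMap.add_apply, LinearMap.smul_apply, smul_eq_mul, tp_apply]
        ring
      · rw [hφ1]
        simp only [LinearMap.add_apply, LinearMap.smul_apply, smul_eq_mul,
          Finset.sum_add_distrib]
        rw [← Finset.mul_sum, ← Finset.mul_sum, trace_tp, trace_tp, hvw, hwv]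
        ring
    have hT2 : IsTracelessSymForm b φ2 := by
      constructor
      · intro x y
        rw [hφ2]
        simp only [LinearMap.add_apply, LinearMap.smul_apply, smul_eq_mul, tp_apply,
          gform_apply]
        rw [real_inner_comm y x]
        ring
      · rw [hφ2]
        simp only [LinearMap.add_apply, LinearMap.smul_apply, smul_eq_mul,
          Finset.sum_add_distrib]
        rw [← Finset.mul_sum, ← Finset.mul_sum, trace_tp, trace_gform, hvv]
        push_cast
        ring
    -- orthonormality
    have hFI00 : formInner b φ0 φ0 = 1 := by
      rw [hφ0]
      simp only [FI_add_left, FI_add_right, FI_smul_left, FI_smul_right, FI_tp]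
      simp only [hvv, huu, hww, hvu, huv, hvw, hwv, huw, hwu]
      linear_combination 2 * hs2
    have hFI11 : formInner b φ1 φ1 = 1 := by
      rw [hφ1]
      simp only [FI_add_left, FI_add_right, FI_smul_left, FI_smul_right, FI_tp]
      simp only [hvv, huu, hww, hvu, huv, hvw, hwv, huw, hwu]
      linear_combination 2 * hs2
    have hFI22 : formInner b φ2 φ2 = 1 := by
      rw [hφ2]
      simp only [FI_add_left, FI_add_right, FI_smul_left, FI_smul_right, FI_tp,
        FI_tp_g, FI_g_tp, FI_g_g]
      rw [hvv]
      push_cast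
      linear_combination 6 * hs6
    have hFI01 : formInner b φ0 φ1 = 0 := by
      rw [hφ0, hφ1]
      simp only [FI_add_left, FI_add_right, FI_smul_left, FI_smul_right, FI_tp]
      simp only [hvv, huu, hww, hvu, huv, hvw, hwv, huw, hwu]
      ring
    have hFI02 : formInner b φ0 φ2 = 0 := by
      rw [hφ0, hφ2]
      simp only [FI_add_left, FI_add_right, FI_smul_left, FI_smul_right, FI_tp,
        FI_tp_g]
      simp only [hvv, huu, hww, hvu, huv, hvw, hwv, huw, hwu]
      ring
    have hFI12 : formInner b φ1 φ2 = 0 := by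
      rw [hφ1, hφ2]
      simp only [FI_add_left, FI_add_right, FI_smul_left, FI_smul_right, FI_tp,
        FI_tp_g]
      simp only [hvv, huu, hww, hvu, huv, hvw, hwv, huw, hwu]
      ring
    have hFI10 : formInner b φ1 φ0 = 0 := by rw [FI_comm]; exact hFI01
    have hFI20 : formInner b φ2 φ0 = 0 := by rw [FI_comm]; exact hFI02
    have hFI21 : formInner b φ2 φ1 = 0 := by rw [FI_comm]; exact hFI12
    have hsum := h3 ![φ0, φ1, φ2]
      (by
        intro a
        fin_cases a
        · exact hT0
        · exact hT1
        · exact hT2)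
      (by
        intro a a'
        fin_cases a <;> fin_cases a' <;>
          simp [hFI00, hFI01, hFI02, hFI10, hFI11, hFI12, hFI20, hFI21, hFI22])
    rw [Fin.sum_univ_three] at hsum
    simp only [Matrix.cons_val_zero, Matrix.cons_val_one, Matrix.head_cons,
      Matrix.cons_val_two, Matrix.tail_cons] at hsum
    rw [hSK0, hSK1, hSK2] at hsum
    linarith [hric]
  refine ⟨?_, hmain⟩
  have h0 := hmain (b 0) (b.orthonormal.1 0)
  have h1 := hmain (b 1) (b.orthonormal.1 1)
  have h2 := hmain (b 2) (b.orthonormal.1 2)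
  have hsum : ricci b R (b 0) (b 0) + ricci b R (b 1) (b 1) + ricci b R (b 2) (b 2)
      = scalarCurv b R := by
    simp only [ricci, scalarCurv, Fin.sum_univ_three]
  linarith
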